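/- Let G be a 3-regular finite simple graph on n vertices (so n is even, n ≥ 4), and let q = 3n + 4. Then δ_edit(G[q], D_{n,q}) ≤ n if and only if G has a Hamiltonian cycle. -/

import Mathlib

open SimpleGraph

section MismatchDefs

variable {V W : Type*}

/-- The mismatch graph `G^π − H`: the symmetric difference of the image of `G` under the
bijection `π` with `H`, as a graph on `V(H)`. Its edges are the positive edges
(edges of `G^π` not in `H`) together with the negative edges (edges of `H` not in `G^π`). -/
def mismatchGraph (G : SimpleGraph V) (H : SimpleGraph W) (π : V ≃ W) : SimpleGraph W :=
  symmDiff (G.map π.toEmbedding) H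

/-- The degree of a vertex in the mismatch graph `G^π − H`. -/
noncomputable def mismatchDeg (G : SimpleGraph V) (H : SimpleGraph W) (π : V ≃ W) (x : W) : ℕ :=
  ((mismatchGraph G H π).neighborSet x).ncard

/-- The number of positive edges of `G^π − H` incident to `x`. -/
noncomputable def posDeg (G : SimpleGraph V) (H : SimpleGraph W) (π : V ≃ W) (x : W) : ℕ :=
  ((G.map π.toEmbedding).neighborSet x \ H.neighborSet x).ncard

/-- The number of negative edges of `G^π − H` incident to `x`. -/
noncomputable def negDeg (G : SimpleGraph V) (H : SimpleGraph W) (π : V ≃ W) (x : W) : ℕ :=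
  (H.neighborSet x \ (G.map π.toEmbedding).neighborSet x).ncard

/-- The maximum mismatch count `MMC(π)`: the maximum degree of the mismatch graph `G^π − H`. -/
noncomputable def MMC [Fintype W] (G : SimpleGraph V) (H : SimpleGraph W) (π : V ≃ W) : ℕ :=
  Finset.univ.sup (mismatchDeg G H π)

/-- The edit mismatch norm `μ_edit(G^π, H)`: the number of edges of the mismatch graph. -/
noncomputable def muEdit (G : SimpleGraph V) (H : SimpleGraph W) (π : V ≃ W) : ℕ :=
  (mismatchGraph G H π).edgeSet.ncard

/-- The edit distance `δ_edit(G, H)`: the minimum of `μ_edit(G^π, H)` over all bijections. -/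
noncomputable def deltaEdit (G : SimpleGraph V) (H : SimpleGraph W) : ℕ :=
  ⨅ π : V ≃ W, muEdit G H π

open Classical in
/-- The signed adjacency matrix of the mismatch graph `G^π − H`:
`+1` on positive edges, `−1` on negative edges, `0` otherwise. -/
noncomputable def signedAdj (G : SimpleGraph V) (H : SimpleGraph W) (π : V ≃ W) :
    Matrix W W ℝ := fun x y =>
  if (G.map π.toEmbedding).Adj x y ∧ ¬ H.Adj x y then 1
  else if H.Adj x y ∧ ¬ (G.map π.toEmbedding).Adj x y then -1 else 0

/-- The `ℓ_p` norm of a vector over a finite index type. -/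
noncomputable def lpNorm [Fintype W] (p : ℝ) (x : W → ℝ) : ℝ :=
  (∑ i, |x i| ^ p) ^ p⁻¹

/-- The `ℓ_p`-operator norm of a matrix: `sup_{x ≠ 0} ‖Mx‖_p / ‖x‖_p`. -/
noncomputable def lpOpNorm [Fintype W] (p : ℝ) (M : Matrix W W ℝ) : ℝ :=
  ⨆ x : {x : W → ℝ // x ≠ 0}, lpNorm p (M.mulVec x.1) / lpNorm p x.1

end MismatchDefs

/-- `G[q]`: attach an auxiliary `(q+1)`-clique to each vertex `v` of `G`.
The clique vertices of `v` are `Sum.inr (v, i)` for `i : Fin (q+1)`; the clique is joined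
to `v` via the edge `{v^[1], v}`, where `v^[1]` is `Sum.inr (v, 0)`. -/
def extendCliques {V : Type*} (G : SimpleGraph V) (q : ℕ) :
    SimpleGraph (V ⊕ V × Fin (q + 1)) :=
  SimpleGraph.fromRel (fun a b =>
    match a, b with
    | Sum.inl u, Sum.inl v => G.Adj u v
    | Sum.inl u, Sum.inr (v, i) => u = v ∧ i = 0
    | Sum.inr _, Sum.inl _ => False
    | Sum.inr (u, _), Sum.inr (v, _) => u = v)

/-- `D_{n,q}`: the graph `C_n[q]` together with the edges `{u^[1], v^[1]}` for `{u,v}`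
ranging over the perfect matching `{{2i, 2i+1} : 0 ≤ i < n/2}` of the cycle `C_n`
(`n` even). -/
def Dgraph (n q : ℕ) : SimpleGraph (Fin n ⊕ Fin n × Fin (q + 1)) :=
  extendCliques (SimpleGraph.cycleGraph n) q ⊔
    SimpleGraph.fromRel (fun a b =>
      match a, b with
      | Sum.inr (u, i), Sum.inr (v, j) => i = 0 ∧ j = 0 ∧ u.val / 2 = v.val / 2
      | _, _ => False)

set_option linter.unusedSectionVars false
set_option linter.unusedVariables false
set_option maxHeartbeats 1000000
open Fin.NatCast Fin.CommRing

section HamAux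
set_option linter.unusedSectionVars false


variable {V : Type*} [Fintype V] [DecidableEq V]

section BuildCycle

variable {n : ℕ} [NeZero n] (G : SimpleGraph V) (σ : Fin n → V)
  (h : ∀ i : Fin n, G.Adj (σ i) (σ (i + 1)))

private def walkAux (h : ∀ i : Fin n, G.Adj (σ i) (σ (i + 1))) :
    (k : ℕ) → G.Walk (σ ((k : ℕ) : Fin n)) (σ ((0 : ℕ) : Fin n))
  | 0 => SimpleGraph.Walk.nil
  | k + 1 => SimpleGraph.Walk.cons
      (by
        have := (h ((k : ℕ) : Fin n)).symm
        have e : (((k + 1 : ℕ)) : Fin n) = ((k : ℕ) : Fin n) + 1 := by push_cast; ring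
        rw [e]; exact this)
      (walkAux h k)

lemma walkAux_support (k : ℕ) :
    (walkAux G σ h k).support = ((List.range (k + 1)).reverse).map (fun j => σ ((j : ℕ) : Fin n)) := by
  induction k with
  | zero => simp [walkAux, List.range_succ]
  | succ k ih =>
    rw [walkAux, SimpleGraph.Walk.support_cons, ih]
    push_cast
    simp [List.range_succ]

lemma walkAux_edges (k : ℕ) :
    ∀ e ∈ (walkAux G σ h k).edges, ∃ j : ℕ, j < k ∧ e = s(σ (((j+1 : ℕ)) : Fin n), σ ((j : ℕ) : Fin n)) := by
  induction k with
  | zero => simp [walkAux]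
  | succ k ih =>
    intro e he
    rw [walkAux, SimpleGraph.Walk.edges_cons] at he
    rcases List.mem_cons.mp he with rfl | he
    · exact ⟨k, Nat.lt_succ_self _, rfl⟩
    · obtain ⟨j, hj, rfl⟩ := ih e he
      exact ⟨j, hj.trans (Nat.lt_succ_self _), rfl⟩

end BuildCycle

lemma natCast_fin_injOn (n : ℕ) [NeZero n] : ∀ j1 < n, ∀ j2 < n,
    ((j1 : ℕ) : Fin n) = ((j2 : ℕ) : Fin n) → j1 = j2 := by
  intro j1 h1 j2 h2 he
  have := congrArg Fin.val he
  rwa [Fin.val_cast_of_lt h1, Fin.val_cast_of_lt h2] at this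

lemma isHamiltonian_of_equiv {n : ℕ} [NeZero n] (hn : 3 ≤ n) (G : SimpleGraph V)
    (σ : Fin n ≃ V) (h : ∀ i : Fin n, G.Adj (σ i) (σ (i + 1))) : G.IsHamiltonian := by
  intro _
  set w := walkAux G σ h (n - 1) with hw
  have hadj : G.Adj (σ ((0 : ℕ) : Fin n)) (σ (((n-1 : ℕ)) : Fin n)) := by
    have := h (((n-1 : ℕ)) : Fin n)
    have e : (((n-1 : ℕ)) : Fin n) + 1 = ((0 : ℕ) : Fin n) := by
      have : (((n-1 : ℕ)) : Fin n) + 1 = (((n-1+1 : ℕ)) : Fin n) := by push_cast; ring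
      rw [this]
      have : n - 1 + 1 = n := by omega
      rw [this]
      simp
    rw [e] at this
    exact this.symm
  set c : G.Walk (σ ((0:ℕ) : Fin n)) (σ ((0:ℕ) : Fin n)) := SimpleGraph.Walk.cons hadj w with hc
  refine ⟨_, c, ?_⟩
  have hsup : w.support = ((List.range (n - 1 + 1)).reverse).map (fun j => σ ((j : ℕ) : Fin n)) :=
    walkAux_support G σ h (n-1)
  have hnodup : w.support.Nodup := by
    rw [hsup]
    refine List.Nodup.map_on ?_ (by simp [List.nodup_range])
    intro j1 hj1 j2 hj2 he
    simp only [List.mem_reverse, List.mem_range] at hj1 hj2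
    exact natCast_fin_injOn n j1 (by omega) j2 (by omega) (σ.injective he)
  have hpath : w.IsPath := SimpleGraph.Walk.IsPath.mk' hnodup
  have hcyc : c.IsCycle := by
    rw [hc, SimpleGraph.Walk.cons_isCycle_iff]
    refine ⟨hpath, ?_⟩
    intro hmem
    obtain ⟨j, hj, he⟩ := walkAux_edges G σ h (n-1) _ hmem
    rw [Sym2.eq_iff] at he
    rcases he with ⟨h1, h2⟩ | ⟨h1, h2⟩
    · have := natCast_fin_injOn n 0 (by omega) (j+1) (by omega) (σ.injective h1)
      omega
    · have hj0 := natCast_fin_injOn n 0 (by omega) j (by omega) (σ.injective h1)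
      have := natCast_fin_injOn n (n-1) (by omega) (j+1) (by omega) (σ.injective h2)
      omega
  rw [SimpleGraph.Walk.isHamiltonianCycle_iff_isCycle_and_support_count_tail_eq_one]
  refine ⟨hcyc, ?_⟩
  intro a
  have : c.support.tail = w.support := by rw [hc, SimpleGraph.Walk.support_cons]; rfl
  rw [this]
  refine List.count_eq_one_of_mem hnodup ?_
  rw [hsup]
  obtain ⟨i, rfl⟩ := σ.surjective a
  refine List.mem_map.mpr ⟨i.val, ?_, by simp⟩
  simp only [List.mem_reverse, List.mem_range]
  omega





lemma exists_equiv_of_isHamiltonian {n : ℕ} [NeZero n] (hn : 3 ≤ n) (G : SimpleGraph V)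
    (hcard : Fintype.card V = n) (hG : G.IsHamiltonian) :
    ∃ σ : Fin n ≃ V, ∀ i : Fin n, G.Adj (σ i) (σ (i + 1)) := by
  obtain ⟨a, p, hp⟩ := hG (by omega)
  have hplen : p.length = n := by rw [hp.length_eq, hcard]
  have hslen : p.support.length = n + 1 := by rw [p.length_support, hplen]
  have hlen : p.support.tail.length = n := by rw [List.length_tail]; omega
  have hnodup : p.support.tail.Nodup := hp.isCycle.support_nodup
  have hcount := (SimpleGraph.Walk.isHamiltonianCycle_iff_isCycle_and_support_count_tail_eq_one.mp hp).2
  have hmem : ∀ b : V, b ∈ p.support.tail := by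
    intro b
    have h := hcount b
    exact List.count_pos_iff.mp (by omega)
  set f : Fin n → V := fun i => p.support.tail[(i : ℕ)]'(by rw [hlen]; exact i.isLt) with hf
  have hinj : Function.Injective f := by
    intro i j hij
    have h2 := (hnodup.getElem_inj_iff (hi := by rw [hlen]; exact i.isLt)
      (hj := by rw [hlen]; exact j.isLt)).mp hij
    exact Fin.ext h2
  have hbij : Function.Bijective f :=
    (Fintype.bijective_iff_injective_and_card f).mpr ⟨hinj, by simp [hcard]⟩
  refine ⟨Equiv.ofBijective f hbij, ?_⟩
  have hchainS : ∀ (i : ℕ) (h : i < p.support.length - 1),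
      G.Adj (p.support.get ⟨i, by omega⟩) (p.support.get ⟨i+1, by omega⟩) :=
    fun i h => List.isChain_iff_getElem.mp p.isChain_adj_support i (by omega)
  have hadjS : ∀ (i : ℕ) (h : i + 1 < n + 1),
      G.Adj (p.support[i]'(by omega)) (p.support[i+1]'(by omega)) := by
    intro i h
    have := hchainS i (by omega)
    simpa using this
  have htail : ∀ (i : ℕ) (h : i < n), p.support.tail[i]'(by omega) = p.support[i+1]'(by omega) := by
    intro i h
    simp
  have hzero : p.support[0]'(by omega) = a := by
    rw [List.getElem_zero]
    exact p.head_support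
  have hlast : p.support.tail[n-1]'(by omega) = a := by
    have h1 := p.getLast_support
    rw [List.getLast_eq_getElem] at h1
    rw [htail (n-1) (by omega)]
    have heq : n - 1 + 1 = p.support.length - 1 := by omega
    simp only [heq]
    exact h1
  intro i
  simp only [Equiv.ofBijective_apply, hf]
  have hv : ((i + 1 : Fin n) : ℕ) = ((i : ℕ) + 1) % n := by
    rw [Fin.val_add, Fin.val_one', Nat.mod_eq_of_lt (show 1 < n by omega)]
  by_cases hi : (i : ℕ) + 1 < n
  · have hv' : ((i + 1 : Fin n) : ℕ) = (i : ℕ) + 1 := by rw [hv, Nat.mod_eq_of_lt hi]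
    simp only [hv']
    rw [htail i (by omega), htail (i+1) (by omega)]
    exact hadjS (i+1) (by omega)
  · have hival : (i : ℕ) = n - 1 := by have := i.isLt; omega
    have hv' : ((i + 1 : Fin n) : ℕ) = 0 := by
      rw [hv, hival, Nat.sub_add_cancel (by omega), Nat.mod_self]
    simp only [hv', hival]
    rw [hlast, htail 0 (by omega)]
    have := hadjS 0 (by omega)
    rwa [hzero] at this

end HamAux

namespace Stmt4Aux

/- ### adjacency lemmas (tested in adj.lean, inlined here) -/
section Adj
variable {V : Type*} {G : SimpleGraph V} {q : ℕ}

lemma eC_inl_inl {u v : V} : (extendCliques G q).Adj (Sum.inl u) (Sum.inl v) ↔ G.Adj u v := by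
  simp only [extendCliques, fromRel_adj]
  constructor
  · rintro ⟨-, h | h⟩
    · exact h
    · exact h.symm
  · intro h
    exact ⟨by simpa using G.ne_of_adj h, Or.inl h⟩

lemma eC_inl_inr {u v : V} {i : Fin (q+1)} :
    (extendCliques G q).Adj (Sum.inl u) (Sum.inr (v, i)) ↔ u = v ∧ i = 0 := by
  simp only [extendCliques, fromRel_adj]
  constructor
  · rintro ⟨-, h | h⟩
    · exact h
    · exact h.elim
  · rintro ⟨rfl, rfl⟩
    exact ⟨by simp, Or.inl ⟨rfl, rfl⟩⟩

lemma eC_inr_inl {u v : V} {i : Fin (q+1)} :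
    (extendCliques G q).Adj (Sum.inr (v, i)) (Sum.inl u) ↔ u = v ∧ i = 0 := by
  rw [SimpleGraph.adj_comm]; exact eC_inl_inr

lemma eC_inr_inr {u v : V} {i j : Fin (q+1)} :
    (extendCliques G q).Adj (Sum.inr (u, i)) (Sum.inr (v, j)) ↔ u = v ∧ i ≠ j := by
  simp only [extendCliques, fromRel_adj]
  constructor
  · rintro ⟨hne, h | h⟩
    · exact ⟨h, fun hij => hne (by rw [h, hij])⟩
    · exact ⟨h.symm, fun hij => hne (by rw [h, hij])⟩
  · rintro ⟨rfl, hij⟩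
    exact ⟨by simpa using hij, Or.inl rfl⟩

variable {n : ℕ}

lemma D_inl_inl {u v : Fin n} :
    (Dgraph n q).Adj (Sum.inl u) (Sum.inl v) ↔ (cycleGraph n).Adj u v := by
  simp only [Dgraph, sup_adj, eC_inl_inl, fromRel_adj]
  constructor
  · rintro (h | ⟨-, h | h⟩)
    · exact h
    · exact h.elim
    · exact h.elim
  · exact Or.inl

lemma D_inl_inr {u v : Fin n} {i : Fin (q+1)} :
    (Dgraph n q).Adj (Sum.inl u) (Sum.inr (v, i)) ↔ u = v ∧ i = 0 := by
  simp only [Dgraph, sup_adj, eC_inl_inr, fromRel_adj]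
  constructor
  · rintro (h | ⟨-, h | h⟩)
    · exact h
    · exact h.elim
    · exact h.elim
  · exact Or.inl

lemma D_inr_inl {u v : Fin n} {i : Fin (q+1)} :
    (Dgraph n q).Adj (Sum.inr (v, i)) (Sum.inl u) ↔ u = v ∧ i = 0 := by
  rw [SimpleGraph.adj_comm]; exact D_inl_inr

lemma D_inr_inr {u v : Fin n} {i j : Fin (q+1)} :
    (Dgraph n q).Adj (Sum.inr (u, i)) (Sum.inr (v, j)) ↔
      (u = v ∧ i ≠ j) ∨ (i = 0 ∧ j = 0 ∧ u ≠ v ∧ u.val / 2 = v.val / 2) := by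
  simp only [Dgraph, sup_adj, eC_inr_inr, fromRel_adj]
  constructor
  · rintro (h | ⟨hne, h | h⟩)
    · exact Or.inl h
    · obtain ⟨hi, hj, hd⟩ := h
      refine Or.inr ⟨hi, hj, fun huv => hne (by rw [huv, hi, hj]), hd⟩
    · obtain ⟨hj, hi, hd⟩ := h
      refine Or.inr ⟨hi, hj, fun huv => hne (by rw [huv, hi, hj]), hd.symm⟩
  · rintro (h | ⟨hi, hj, huv, hd⟩)
    · exact Or.inl h
    · exact Or.inr ⟨by simp only [ne_eq, Sum.inr.injEq, Prod.mk.injEq]; tauto,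
        Or.inl ⟨hi, hj, hd⟩⟩

end Adj

/- ### mismatch basics -/
section MM
variable {V W : Type*} {G : SimpleGraph V} {H : SimpleGraph W} {π : V ≃ W}

lemma map_equiv_adj {x y : W} : (G.map π.toEmbedding).Adj x y ↔ G.Adj (π.symm x) (π.symm y) := by
  simp only [SimpleGraph.map_adj]
  constructor
  · rintro ⟨a, b, h, rfl, rfl⟩; simpa using h
  · intro h; exact ⟨_, _, h, by simp, by simp⟩

lemma mismatch_adj {x y : W} : (mismatchGraph G H π).Adj x y ↔
    (G.Adj (π.symm x) (π.symm y) ∧ ¬ H.Adj x y) ∨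
      (H.Adj x y ∧ ¬ G.Adj (π.symm x) (π.symm y)) := by
  rw [mismatchGraph, symmDiff_def]
  simp only [sup_adj, sdiff_adj, map_equiv_adj]

variable [Fintype W]

lemma finset_card_le_muEdit {s : Finset (Sym2 W)}
    (hs : ∀ e ∈ s, e ∈ (mismatchGraph G H π).edgeSet) : s.card ≤ muEdit G H π := by
  rw [muEdit, ← Set.ncard_coe_finset]
  exact Set.ncard_le_ncard (fun e he => hs e (by simpa using he)) (Set.toFinite _)

lemma mismatchDeg_le_muEdit (x : W) : mismatchDeg G H π x ≤ muEdit G H π := by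
  rw [mismatchDeg, muEdit]
  have hinj : Function.Injective (fun y => s(x, y)) := fun a b hab => by
    exact Sym2.congr_right.mp hab
  rw [← Set.ncard_image_of_injective _ hinj]
  apply Set.ncard_le_ncard _ (Set.toFinite _)
  rintro e ⟨y, hy, rfl⟩
  exact hy

lemma pos_le_mismatchDeg {x : W} {A : Set W}
    (hA : ∀ y ∈ A, G.Adj (π.symm x) (π.symm y)) :
    (A \ H.neighborSet x).ncard ≤ mismatchDeg G H π x := by
  apply Set.ncard_le_ncard _ (Set.toFinite _)
  rintro y ⟨hy, hny⟩
  rw [SimpleGraph.mem_neighborSet, mismatch_adj]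
  exact Or.inl ⟨hA y hy, hny⟩

end MM

/- ### structure of low-cost bijections -/

variable {V : Type*} [Fintype V] [DecidableEq V]

lemma neighborSetD_inl_subset {n q : ℕ} [NeZero n] (hn : 2 ≤ n) (w : Fin n) :
    (Dgraph n q).neighborSet (Sum.inl w) ⊆
      {Sum.inl (w - 1), Sum.inl (w + 1), Sum.inr (w, 0)} := by
  rintro (u | ⟨u, k⟩) hy
  · rw [SimpleGraph.mem_neighborSet, D_inl_inl, cycleGraph_adj'] at hy
    have hone : ((1 : Fin n) : ℕ) = 1 := by
      rw [Fin.val_one']; exact Nat.mod_eq_of_lt (by omega)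
    rcases hy with h | h
    · -- (w - u).val = 1, so w - u = 1, u = w - 1
      have : w - u = 1 := Fin.ext (by rw [hone]; exact h)
      have hu : u = w - 1 := by
        have := sub_eq_iff_eq_add.mp this
        rw [this]; ring
      rw [hu]
      simp only [Set.mem_insert_iff, Set.mem_singleton_iff]; tauto
    · have : u - w = 1 := Fin.ext (by rw [hone]; exact h)
      have hu : u = w + 1 := by
        have := sub_eq_iff_eq_add.mp this
        rw [this]; ring
      rw [hu]
      simp only [Set.mem_insert_iff, Set.mem_singleton_iff]; tauto
  · rw [SimpleGraph.mem_neighborSet, D_inl_inr] at hy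
    obtain ⟨rfl, rfl⟩ := hy
    simp only [Set.mem_insert_iff, Set.mem_singleton_iff]; tauto

lemma step2 {n q : ℕ} (hn : 4 ≤ n) (hq : n + 4 ≤ q) (G : SimpleGraph V)
    (π : (V ⊕ V × Fin (q + 1)) ≃ (Fin n ⊕ Fin n × Fin (q + 1)))
    (hmu : muEdit (extendCliques G q) (Dgraph n q) π ≤ n) (v : V) (i : Fin (q + 1)) :
    ∃ w j, π (Sum.inr (v, i)) = Sum.inr (w, j) := by
  rcases hπ : π (Sum.inr (v, i)) with w | ⟨w, j⟩
  swap
  · exact ⟨w, j, rfl⟩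
  exfalso
  haveI : NeZero n := ⟨by omega⟩
  set A : Set (Fin n ⊕ Fin n × Fin (q + 1)) :=
    π '' ((fun k => Sum.inr (v, k)) '' {k | k ≠ i}) with hA
  have hAsub : ∀ y ∈ A, (extendCliques G q).Adj (π.symm (Sum.inl w)) (π.symm y) := by
    rintro y ⟨z, ⟨k, hk, rfl⟩, rfl⟩
    have hx : π.symm (Sum.inl w) = Sum.inr (v, i) := by rw [← hπ]; simp
    rw [hx, Equiv.symm_apply_apply]
    exact eC_inr_inr.mpr ⟨rfl, fun h => hk (by simpa using h.symm)⟩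
  have hcardA : A.ncard = q := by
    rw [hA, Set.ncard_image_of_injective _ π.injective,
      Set.ncard_image_of_injective _ (fun a b h => by simpa using h)]
    have he : ({k | k ≠ i} : Set (Fin (q + 1))) = {i}ᶜ := by ext k; simp
    rw [he, Set.ncard_eq_toFinset_card', Set.toFinset_compl, Set.toFinset_singleton,
      Finset.card_compl, Finset.card_singleton, Fintype.card_fin]
    omega
  have h1 : (A \ (Dgraph n q).neighborSet (Sum.inl w)).ncard ≤
      mismatchDeg (extendCliques G q) (Dgraph n q) π (Sum.inl w) := pos_le_mismatchDeg hAsub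
  have h2 : A.ncard ≤ (A \ (Dgraph n q).neighborSet (Sum.inl w)).ncard + 3 := by
    refine le_trans (Set.ncard_le_ncard_diff_add_ncard A ((Dgraph n q).neighborSet (Sum.inl w)) (Set.toFinite _)) ?_
    have h3 : ((Dgraph n q).neighborSet (Sum.inl w)).ncard ≤ 3 := by
      refine le_trans (Set.ncard_le_ncard (neighborSetD_inl_subset (by omega) w)
        (Set.toFinite _)) ?_
      refine le_trans (Set.ncard_insert_le _ _) ?_
      have := Set.ncard_insert_le (Sum.inl (w + 1) : Fin n ⊕ Fin n × Fin (q+1))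
        ({Sum.inr (w, 0)} : Set _)
      simp only [Set.ncard_singleton] at this ⊢
      omega
    omega
  have h4 := mismatchDeg_le_muEdit (G := extendCliques G q) (H := Dgraph n q) (π := π)
    (Sum.inl w)
  omega

lemma step3aux {n q : ℕ} (hn : 4 ≤ n) (hq : 2 * n + 2 ≤ q) (hEven : Even n) (G : SimpleGraph V)
    (π : (V ⊕ V × Fin (q + 1)) ≃ (Fin n ⊕ Fin n × Fin (q + 1)))
    (hmu : muEdit (extendCliques G q) (Dgraph n q) π ≤ n)
    (hInr : ∀ (v' : V) (k : Fin (q + 1)), ∃ u j2, π (Sum.inr (v', k)) = Sum.inr (u, j2))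
    (v : V) (i : Fin (q + 1)) (w : Fin n) (j : Fin (q + 1))
    (h1 : π (Sum.inr (v, i)) = Sum.inr (w, j))
    (hS : 2 * ({k : Fin (q + 1) | ∃ j2, π (Sum.inr (v, k)) = Sum.inr (w, j2)}).ncard ≤ q + 1) :
    False := by
  obtain ⟨r, hr⟩ := hEven
  set S := {k : Fin (q + 1) | ∃ j2, π (Sum.inr (v, k)) = Sum.inr (w, j2)} with hSdef
  have hiS : i ∈ S := ⟨j, h1⟩
  set A := π '' ((fun k => Sum.inr (v, k)) '' Sᶜ) with hA
  have hAsub : ∀ y ∈ A, (extendCliques G q).Adj (π.symm (Sum.inr (w, j))) (π.symm y) := by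
    rintro y ⟨z, ⟨k, hk, rfl⟩, rfl⟩
    have hx : π.symm (Sum.inr (w, j)) = Sum.inr (v, i) := by rw [← h1]; simp
    rw [hx, Equiv.symm_apply_apply]
    refine eC_inr_inr.mpr ⟨rfl, ?_⟩
    intro hik
    exact hk (hik ▸ hiS)
  have hcardA : A.ncard + S.ncard = q + 1 := by
    rw [hA, Set.ncard_image_of_injective _ π.injective,
      Set.ncard_image_of_injective _ (fun a b h => by simpa using h), add_comm,
      Set.ncard_add_ncard_compl]
    simp
  have hw2 : 2 * (w.val / 2) + (1 - w.val % 2) < n := by have := w.isLt; omega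
  set m : Fin n := ⟨2 * (w.val / 2) + (1 - w.val % 2), hw2⟩ with hm
  have hsub : A \ {Sum.inr (m, (0 : Fin (q + 1)))} ⊆
      A \ (Dgraph n q).neighborSet (Sum.inr (w, j)) := by
    rintro y ⟨hyA, hym⟩
    refine ⟨hyA, ?_⟩
    intro hyN
    obtain ⟨z, ⟨k, hk, rfl⟩, rfl⟩ := hyA
    obtain ⟨u2, j2, hu2⟩ := hInr v k
    rw [hu2] at hyN hym
    rw [SimpleGraph.mem_neighborSet, D_inr_inr] at hyN
    rcases hyN with ⟨hwu, hnej⟩ | ⟨hj0, hj20, hne, hdiv⟩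
    · exact hk ⟨j2, by rw [hu2, ← hwu]⟩
    · apply hym
      have hval : w.val ≠ u2.val := fun h => hne (Fin.ext h)
      have hu2m : u2 = m := by
        apply Fin.ext
        show u2.val = 2 * (w.val / 2) + (1 - w.val % 2)
        have := u2.isLt
        omega
      rw [Set.mem_singleton_iff, hu2m, hj20]
  have hd1 : A.ncard - 1 ≤ (A \ {Sum.inr (m, (0 : Fin (q + 1)))}).ncard :=
    Set.pred_ncard_le_ncard_diff_singleton A _
  have hd2 : (A \ {Sum.inr (m, (0 : Fin (q + 1)))}).ncard ≤
      (A \ (Dgraph n q).neighborSet (Sum.inr (w, j))).ncard :=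
    Set.ncard_le_ncard hsub (Set.toFinite _)
  have hd3 := pos_le_mismatchDeg (H := Dgraph n q) hAsub
  have hd4 := mismatchDeg_le_muEdit (G := extendCliques G q) (H := Dgraph n q) (π := π)
    (Sum.inr (w, j))
  omega

lemma step3 {n q : ℕ} (hn : 4 ≤ n) (hq : 2 * n + 2 ≤ q) (hEven : Even n) (G : SimpleGraph V)
    (π : (V ⊕ V × Fin (q + 1)) ≃ (Fin n ⊕ Fin n × Fin (q + 1)))
    (hmu : muEdit (extendCliques G q) (Dgraph n q) π ≤ n)
    (hInr : ∀ (v' : V) (k : Fin (q + 1)), ∃ u j2, π (Sum.inr (v', k)) = Sum.inr (u, j2))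
    (v : V) {i i' : Fin (q + 1)} {w w' : Fin n} {j j' : Fin (q + 1)}
    (h1 : π (Sum.inr (v, i)) = Sum.inr (w, j))
    (h2 : π (Sum.inr (v, i')) = Sum.inr (w', j')) : w = w' := by
  by_contra hne
  set S := {k : Fin (q + 1) | ∃ j2, π (Sum.inr (v, k)) = Sum.inr (w, j2)} with hSdef
  set S' := {k : Fin (q + 1) | ∃ j2, π (Sum.inr (v, k)) = Sum.inr (w', j2)} with hS'def
  have hsub : S' ⊆ Sᶜ := by
    rintro k ⟨j2, hj2⟩ ⟨j3, hj3⟩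
    rw [hj2] at hj3
    simp only [Sum.inr.injEq, Prod.mk.injEq] at hj3
    exact hne hj3.1.symm
  have hcompl : S.ncard + Sᶜ.ncard = q + 1 := by
    rw [Set.ncard_add_ncard_compl]; simp
  have hle : S'.ncard ≤ Sᶜ.ncard := Set.ncard_le_ncard hsub (Set.toFinite _)
  rcases le_total S.ncard S'.ncard with h | h
  · refine step3aux hn hq hEven G π hmu hInr v i w j h1 ?_
    rw [← hSdef]
    omega
  · refine step3aux hn hq hEven G π hmu hInr v i' w' j' h2 ?_
    rw [← hS'def]
    omega

lemma structure_of_cheap {n q : ℕ} (hn : 4 ≤ n) (hEven : Even n)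
    (hq1 : n + 4 ≤ q) (hq2 : 2 * n + 2 ≤ q) (G : SimpleGraph V) (hcard : Fintype.card V = n)
    (π : (V ⊕ V × Fin (q + 1)) ≃ (Fin n ⊕ Fin n × Fin (q + 1)))
    (hmu : muEdit (extendCliques G q) (Dgraph n q) π ≤ n) :
    ∃ (σ : V ≃ Fin n) (ρ : V → Fin n),
      (∀ v, π (Sum.inl v) = Sum.inl (σ v)) ∧
      (∀ v k, ∃ j, π (Sum.inr (v, k)) = Sum.inr (ρ v, j)) := by
  have hInr : ∀ (v : V) (k : Fin (q + 1)), ∃ u j, π (Sum.inr (v, k)) = Sum.inr (u, j) :=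
    fun v k => step2 hn hq1 G π hmu v k
  choose u j hu using hInr
  have hconst : ∀ v k, u v k = u v 0 :=
    fun v k => step3 hn hq2 hEven G π hmu (fun v' k' => ⟨u v' k', j v' k', hu v' k'⟩)
      v (hu v k) (hu v 0)
  have hg : Function.Bijective
      (fun p : V × Fin (q + 1) => ((u p.1 p.2, j p.1 p.2) : Fin n × Fin (q + 1))) := by
    rw [Fintype.bijective_iff_injective_and_card]
    constructor
    · intro p p' h
      simp only [Prod.mk.injEq] at h
      have h2 : π (Sum.inr p) = π (Sum.inr p') := by
        rw [show p = (p.1, p.2) from rfl, show p' = (p'.1, p'.2) from rfl, hu p.1 p.2,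
          hu p'.1 p'.2, h.1, h.2]
      simpa using π.injective h2
    · simp [hcard]
  have hInl : ∀ v, ∃ x, π (Sum.inl v) = Sum.inl x := by
    intro v
    rcases hx : π (Sum.inl v) with x | y
    · exact ⟨x, rfl⟩
    · exfalso
      obtain ⟨p, hp⟩ := hg.2 y
      have h2 : π (Sum.inr p) = Sum.inr y := by
        rw [show p = (p.1, p.2) from rfl, hu p.1 p.2]
        rw [show ((u p.1 p.2, j p.1 p.2) : Fin n × Fin (q + 1)) = y from hp]
      have := π.injective (hx.trans h2.symm)
      simp at this
  choose σ0 hσ0 using hInl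
  have hσbij : Function.Bijective σ0 := by
    rw [Fintype.bijective_iff_injective_and_card]
    constructor
    · intro a b h
      have h2 : π (Sum.inl a) = π (Sum.inl b) := by rw [hσ0 a, hσ0 b, h]
      simpa using π.injective h2
    · simp [hcard]
  refine ⟨Equiv.ofBijective σ0 hσbij, fun v => u v 0, fun v => hσ0 v, fun v k => ?_⟩
  exact ⟨j v k, by rw [hu v k, hconst v k]⟩

/- ### the matching edges -/

def msF (n q : ℕ) : Finset (Sym2 (Fin n ⊕ Fin n × Fin (q + 1))) :=
  Finset.image (fun i : Fin (n / 2) =>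
    s(Sum.inr (⟨2 * i.val, by have := i.isLt; omega⟩, (0 : Fin (q + 1))),
      Sum.inr (⟨2 * i.val + 1, by have := i.isLt; omega⟩, (0 : Fin (q + 1))))) Finset.univ

lemma msF_card {n q : ℕ} (hEven : Even n) : 2 * (msF n q).card = n := by
  obtain ⟨r, hr⟩ := hEven
  rw [msF, Finset.card_image_of_injective _ ?_, Finset.card_univ, Fintype.card_fin]
  · omega
  · intro a b hab
    rw [Sym2.eq_iff] at hab
    apply Fin.ext
    rcases hab with ⟨h1, -⟩ | ⟨h1, h2⟩
    · simp only [Sum.inr.injEq, Prod.mk.injEq, Fin.mk.injEq] at h1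
      omega
    · simp only [Sum.inr.injEq, Prod.mk.injEq, Fin.mk.injEq] at h1 h2
      omega

lemma mem_msF {n q : ℕ} (hEven : Even n) {u u' : Fin n} (hne : u ≠ u')
    (hdiv : u.val / 2 = u'.val / 2) :
    s(Sum.inr (u, (0 : Fin (q + 1))), Sum.inr (u', (0 : Fin (q + 1)))) ∈ msF n q := by
  obtain ⟨r, hr⟩ := hEven
  have hlt : u.val / 2 < n / 2 := by have := u.isLt; have := u'.isLt; omega
  have hv : u.val ≠ u'.val := fun h => hne (Fin.ext h)
  rw [msF, Finset.mem_image]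
  refine ⟨⟨u.val / 2, hlt⟩, Finset.mem_univ _, ?_⟩
  rw [Sym2.eq_iff]
  have := u.isLt
  have := u'.isLt
  rcases Nat.lt_or_ge u.val u'.val with h | h
  · left
    constructor
    · congr 1
      exact Prod.ext (Fin.ext (by simp; omega)) rfl
    · congr 1
      exact Prod.ext (Fin.ext (by simp; omega)) rfl
  · right
    constructor
    · congr 1
      exact Prod.ext (Fin.ext (by simp; omega)) rfl
    · congr 1
      exact Prod.ext (Fin.ext (by simp; omega)) rfl

/- ### counting section -/

section Counting

variable {n q : ℕ} {G : SimpleGraph V} [DecidableRel G.Adj]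
  {π : (V ⊕ V × Fin (q + 1)) ≃ (Fin n ⊕ Fin n × Fin (q + 1))}
  {σ : V ≃ Fin n} {ρ : V → Fin n}

/-- Image of the edges of `G` inside `Sym2 (Fin n)`. -/
noncomputable def imG (G : SimpleGraph V) [DecidableRel G.Adj] (σ : V ≃ Fin n) :
    Finset (Sym2 (Fin n)) :=
  G.edgeFinset.image (Sym2.map (σ : V → Fin n))

/-- Embedding of `Sym2 (Fin n)` into the edge type of `Dgraph`. -/
def ψmap (n q : ℕ) : Sym2 (Fin n) → Sym2 (Fin n ⊕ Fin n × Fin (q + 1)) :=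
  Sym2.map (Sum.inl : Fin n → Fin n ⊕ Fin n × Fin (q + 1))

lemma ψmap_injective {n q : ℕ} : Function.Injective (ψmap n q) :=
  Sym2.map.injective (fun a b h => by simpa using h)

lemma imG_card (hcardV : Fintype.card V = n) : (imG G σ).card = G.edgeFinset.card :=
  Finset.card_image_of_injective _ (Sym2.map.injective σ.injective)

lemma mem_imG {a b : V} (h : G.Adj a b) : s(σ a, σ b) ∈ imG G σ := by
  rw [imG, Finset.mem_image]
  exact ⟨s(a, b), by rwa [SimpleGraph.mem_edgeFinset, SimpleGraph.mem_edgeSet], by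
    rw [Sym2.map_pair_eq]⟩

lemma imG_elim {e : Sym2 (Fin n)} (he : e ∈ imG G σ) :
    ∃ a b : V, G.Adj a b ∧ e = s(σ a, σ b) := by
  rw [imG, Finset.mem_image] at he
  obtain ⟨e0, he0, rfl⟩ := he
  induction e0 using Sym2.ind with
  | _ a b =>
    rw [SimpleGraph.mem_edgeFinset, SimpleGraph.mem_edgeSet] at he0
    exact ⟨a, b, he0, by rw [Sym2.map_pair_eq]⟩

lemma hσsymm (hσ : ∀ v, π (Sum.inl v) = Sum.inl (σ v)) (w : Fin n) :
    π.symm (Sum.inl w) = Sum.inl (σ.symm w) := by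
  rw [Equiv.symm_apply_eq, hσ, Equiv.apply_symm_apply]

lemma hρsymm (hσ : ∀ v, π (Sum.inl v) = Sum.inl (σ v))
    (hρ : ∀ v k, ∃ j, π (Sum.inr (v, k)) = Sum.inr (ρ v, j)) (w : Fin n) (k : Fin (q + 1)) :
    ∃ v jj, π.symm (Sum.inr (w, k)) = Sum.inr (v, jj) ∧ ρ v = w := by
  rcases hx : π.symm (Sum.inr (w, k)) with x | ⟨v, jj⟩
  · exfalso
    have : π (Sum.inl x) = Sum.inr (w, k) := by rw [← hx, Equiv.apply_symm_apply]
    rw [hσ] at this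
    simp at this
  · refine ⟨v, jj, rfl, ?_⟩
    obtain ⟨j', hj'⟩ := hρ v jj
    have : π (Sum.inr (v, jj)) = Sum.inr (w, k) := by rw [← hx, Equiv.apply_symm_apply]
    rw [hj'] at this
    have h2 : ρ v = w ∧ j' = k := by simpa using this
    exact h2.1

lemma neg_cycle_mem (hσ : ∀ v, π (Sum.inl v) = Sum.inl (σ v)) {e : Sym2 (Fin n)}
    (he : e ∈ (cycleGraph n).edgeFinset \ imG G σ) :
    ψmap n q e ∈ (mismatchGraph (extendCliques G q) (Dgraph n q) π).edgeSet := by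
  obtain ⟨he1, he2⟩ := Finset.mem_sdiff.mp he
  induction e using Sym2.ind with
  | _ a b =>
    rw [SimpleGraph.mem_edgeFinset, SimpleGraph.mem_edgeSet] at he1
    rw [ψmap, Sym2.map_pair_eq, SimpleGraph.mem_edgeSet, mismatch_adj]
    right
    refine ⟨D_inl_inl.mpr he1, ?_⟩
    intro hadj
    rw [hσsymm hσ, hσsymm hσ, eC_inl_inl] at hadj
    have := mem_imG (σ := σ) hadj
    simp only [Equiv.apply_symm_apply] at this
    exact he2 this

lemma pos_mem (hσ : ∀ v, π (Sum.inl v) = Sum.inl (σ v)) {e : Sym2 (Fin n)}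
    (he : e ∈ imG G σ \ (cycleGraph n).edgeFinset) :
    ψmap n q e ∈ (mismatchGraph (extendCliques G q) (Dgraph n q) π).edgeSet := by
  obtain ⟨he1, he2⟩ := Finset.mem_sdiff.mp he
  obtain ⟨a, b, hab, rfl⟩ := imG_elim he1
  rw [ψmap, Sym2.map_pair_eq, SimpleGraph.mem_edgeSet, mismatch_adj]
  left
  constructor
  · rw [hσsymm hσ, hσsymm hσ, eC_inl_inl]
    simpa using hab
  · intro hD
    rw [D_inl_inl] at hD
    exact he2 (by rw [SimpleGraph.mem_edgeFinset, SimpleGraph.mem_edgeSet]; exact hD)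

lemma msF_neg_mem (hEven : Even n) (hσ : ∀ v, π (Sum.inl v) = Sum.inl (σ v))
    (hρ : ∀ v k, ∃ j, π (Sum.inr (v, k)) = Sum.inr (ρ v, j)) {e}
    (he : e ∈ msF n q) :
    e ∈ (mismatchGraph (extendCliques G q) (Dgraph n q) π).edgeSet := by
  obtain ⟨r, hr⟩ := hEven
  rw [msF, Finset.mem_image] at he
  obtain ⟨i, -, rfl⟩ := he
  rw [SimpleGraph.mem_edgeSet, mismatch_adj]
  right
  constructor
  · apply D_inr_inr.mpr
    right
    refine ⟨rfl, rfl, ?_, ?_⟩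
    · intro h
      have : 2 * i.val = 2 * i.val + 1 := congrArg Fin.val h
      omega
    · simp only
      omega
  · intro hadj
    obtain ⟨v, jj, hx, hv⟩ := hρsymm hσ hρ ⟨2 * i.val, by have := i.isLt; omega⟩ 0
    obtain ⟨v', jj', hx', hv'⟩ := hρsymm hσ hρ ⟨2 * i.val + 1, by have := i.isLt; omega⟩ 0
    rw [hx, hx', eC_inr_inr] at hadj
    obtain ⟨rfl, -⟩ := hadj
    rw [hv'] at hv
    simp only [Fin.mk.injEq] at hv
    omega

lemma cycle_edge_card {n : ℕ} (hn : 3 ≤ n) : (cycleGraph n).edgeFinset.card = n := by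
  obtain ⟨k, rfl⟩ : ∃ k, n = k + 3 := ⟨n - 3, by omega⟩
  have h := SimpleGraph.sum_degrees_eq_twice_card_edges (cycleGraph (k + 3))
  rw [Finset.sum_congr rfl (fun v _ => cycleGraph_degree_three_le)] at h
  rw [Finset.sum_const, Finset.card_univ, Fintype.card_fin, smul_eq_mul] at h
  omega

lemma G_edge_card (hcard : Fintype.card V = n) (hreg : G.IsRegularOfDegree 3) :
    2 * G.edgeFinset.card = 3 * n := by
  have h := SimpleGraph.sum_degrees_eq_twice_card_edges G
  rw [Finset.sum_congr rfl (fun v _ => hreg v)] at h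
  rw [Finset.sum_const, Finset.card_univ, hcard, smul_eq_mul] at h
  omega

lemma ham_of_cheap (hn : 4 ≤ n) (hEven : Even n) (hq1 : n + 4 ≤ q) (hq2 : 2 * n + 2 ≤ q)
    (hcard : Fintype.card V = n) (hreg : G.IsRegularOfDegree 3)
    (π : (V ⊕ V × Fin (q + 1)) ≃ (Fin n ⊕ Fin n × Fin (q + 1)))
    (hmu : muEdit (extendCliques G q) (Dgraph n q) π ≤ n) : G.IsHamiltonian := by
  haveI : NeZero n := ⟨by omega⟩
  obtain ⟨σ, ρ, hσ, hρ⟩ := structure_of_cheap hn hEven hq1 hq2 G hcard π hmu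
  classical
  set cyc := (cycleGraph n).edgeFinset with hcycdef
  set iG := imG G σ with hiGdef
  set s1 := (cyc \ iG).image (ψmap n q) with hs1
  set s2 := (iG \ cyc).image (ψmap n q) with hs2
  have hsub : ∀ e ∈ s1 ∪ s2 ∪ msF n q,
      e ∈ (mismatchGraph (extendCliques G q) (Dgraph n q) π).edgeSet := by
    intro e he
    rcases Finset.mem_union.mp he with he' | he'
    · rcases Finset.mem_union.mp he' with h1 | h2
      · obtain ⟨e0, he0, rfl⟩ := Finset.mem_image.mp h1
        exact neg_cycle_mem hσ he0
      · obtain ⟨e0, he0, rfl⟩ := Finset.mem_image.mp h2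
        exact pos_mem hσ he0
    · exact msF_neg_mem hEven hσ hρ he'
  have hcard_le : (s1 ∪ s2 ∪ msF n q).card ≤ n :=
    le_trans (finset_card_le_muEdit hsub) hmu
  have hdisj12 : Disjoint s1 s2 := by
    rw [hs1, hs2, Finset.disjoint_image ψmap_injective]
    exact disjoint_sdiff_sdiff
  have hdisj3 : Disjoint (s1 ∪ s2) (msF n q) := by
    rw [Finset.disjoint_left]
    intro e he1 he2
    rcases Finset.mem_union.mp he1 with h | h <;>
    · obtain ⟨e0, -, rfl⟩ := Finset.mem_image.mp h
      rw [msF, Finset.mem_image] at he2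
      obtain ⟨i, -, hi⟩ := he2
      induction e0 using Sym2.ind with
      | _ a b =>
        rw [ψmap, Sym2.map_pair_eq, Sym2.eq_iff] at hi
        rcases hi with ⟨h1, -⟩ | ⟨h1, -⟩ <;> exact absurd h1 (by simp)
  have hcards : (s1 ∪ s2 ∪ msF n q).card = s1.card + s2.card + (msF n q).card := by
    rw [Finset.card_union_of_disjoint hdisj3, Finset.card_union_of_disjoint hdisj12]
  have hs1card : (cyc ∩ iG).card + s1.card = cyc.card := by
    rw [hs1, Finset.card_image_of_injective _ ψmap_injective]
    exact Finset.card_inter_add_card_sdiff cyc iG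
  have hs2card : (iG ∩ cyc).card + s2.card = iG.card := by
    rw [hs2, Finset.card_image_of_injective _ ψmap_injective]
    exact Finset.card_inter_add_card_sdiff iG cyc
  have hintercomm : (iG ∩ cyc).card = (cyc ∩ iG).card := by rw [Finset.inter_comm]
  have hcyccard : cyc.card = n := cycle_edge_card (by omega)
  have hiGcard : iG.card = G.edgeFinset.card :=
    Finset.card_image_of_injective _ (Sym2.map.injective σ.injective)
  have hGcard : 2 * G.edgeFinset.card = 3 * n := G_edge_card hcard hreg
  have hmsFcard : 2 * (msF n q).card = n := msF_card hEven
  have hge : cyc.card ≤ (cyc ∩ iG).card := by omega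
  have hsubset : cyc ⊆ iG := by
    have := Finset.eq_of_subset_of_card_le (Finset.inter_subset_left (s₂ := iG)) hge
    rw [← this]
    exact Finset.inter_subset_right
  have hadj : ∀ i : Fin n, G.Adj (σ.symm i) (σ.symm (i + 1)) := by
    intro i
    have hone : ((1 : Fin n) : ℕ) = 1 := by
      rw [Fin.val_one']; exact Nat.mod_eq_of_lt (by omega)
    have hcycmem : s(i, i + 1) ∈ cyc := by
      rw [hcycdef, SimpleGraph.mem_edgeFinset, SimpleGraph.mem_edgeSet, cycleGraph_adj']
      right
      rw [show i + 1 - i = 1 by ring, hone]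
    obtain ⟨a, b, hab, heq⟩ := imG_elim (hsubset hcycmem)
    rw [Sym2.eq_iff] at heq
    rcases heq with ⟨h1, h2⟩ | ⟨h1, h2⟩
    · rw [h2, h1, Equiv.symm_apply_apply, Equiv.symm_apply_apply]
      exact hab
    · rw [h2, h1, Equiv.symm_apply_apply, Equiv.symm_apply_apply]
      exact hab.symm
  exact isHamiltonian_of_equiv (by omega) G σ.symm hadj

lemma cheap_of_ham (hn : 4 ≤ n) (hEven : Even n)
    (hcard : Fintype.card V = n) (hreg : G.IsRegularOfDegree 3) [NeZero n]
    (σ0 : Fin n ≃ V) (hadj0 : ∀ i : Fin n, G.Adj (σ0 i) (σ0 (i + 1))) :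
    ∃ π : (V ⊕ V × Fin (q + 1)) ≃ (Fin n ⊕ Fin n × Fin (q + 1)),
      muEdit (extendCliques G q) (Dgraph n q) π ≤ n := by
  classical
  set σ : V ≃ Fin n := σ0.symm with hσdef
  set π : (V ⊕ V × Fin (q + 1)) ≃ (Fin n ⊕ Fin n × Fin (q + 1)) :=
    Equiv.sumCongr σ (Equiv.prodCongr σ (Equiv.refl (Fin (q + 1)))) with hπdef
  have hσ : ∀ v, π (Sum.inl v) = Sum.inl (σ v) := fun v => rfl
  have hπr : ∀ v k, π (Sum.inr (v, k)) = Sum.inr (σ v, k) := fun v k => rfl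
  have hπls : ∀ w, π.symm (Sum.inl w) = Sum.inl (σ.symm w) := hσsymm hσ
  have hπrs : ∀ w k, π.symm (Sum.inr (w, k)) = Sum.inr (σ.symm w, k) := fun w k => by
    rw [Equiv.symm_apply_eq, hπr, Equiv.apply_symm_apply]
  refine ⟨π, ?_⟩
  have hone : ((1 : Fin n) : ℕ) = 1 := by
    rw [Fin.val_one']; exact Nat.mod_eq_of_lt (by omega)
  have hcycadj : ∀ a b : Fin n, (cycleGraph n).Adj a b → G.Adj (σ.symm a) (σ.symm b) := by
    intro a b hab
    rw [cycleGraph_adj'] at hab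
    rcases hab with h | h
    · have : a - b = 1 := Fin.ext (by rw [hone]; exact h)
      have hb : a = b + 1 := by rw [← this]; ring
      rw [hb]
      exact (hadj0 b).symm
    · have : b - a = 1 := Fin.ext (by rw [hone]; exact h)
      have hb : b = a + 1 := by rw [← this]; ring
      rw [hb]
      exact hadj0 a
  set cyc := (cycleGraph n).edgeFinset with hcycdef
  set iG := imG G σ with hiGdef
  set s2 := (iG \ cyc).image (ψmap n q) with hs2
  have hsubset :
      (mismatchGraph (extendCliques G q) (Dgraph n q) π).edgeSet ⊆ ↑(s2 ∪ msF n q) := by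
    intro e he
    induction e using Sym2.ind with
    | _ x y =>
      rw [SimpleGraph.mem_edgeSet, mismatch_adj] at he
      rw [Finset.coe_union, Set.mem_union]
      match x, y with
      | Sum.inl w, Sum.inl w' =>
        left
        rcases he with ⟨hpos, hneg⟩ | ⟨hD, hneg⟩
        · rw [hπls, hπls, eC_inl_inl] at hpos
          rw [Finset.mem_coe, hs2, Finset.mem_image]
          refine ⟨s(w, w'), Finset.mem_sdiff.mpr ⟨?_, ?_⟩, by rw [ψmap, Sym2.map_pair_eq]⟩
          · have := mem_imG (σ := σ) hpos
            simpa using this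
          · intro hc
            rw [hcycdef, SimpleGraph.mem_edgeFinset, SimpleGraph.mem_edgeSet] at hc
            exact hneg (D_inl_inl.mpr hc)
        · exfalso
          rw [D_inl_inl] at hD
          rw [hπls, hπls, eC_inl_inl] at hneg
          exact hneg (hcycadj w w' hD)
      | Sum.inl w, Sum.inr (u, k) =>
        exfalso
        rcases he with ⟨hpos, hneg⟩ | ⟨hD, hneg⟩
        · rw [hπls, hπrs, eC_inl_inr] at hpos
          exact hneg (D_inl_inr.mpr ⟨σ.symm.injective hpos.1, hpos.2⟩)
        · rw [D_inl_inr] at hD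
          rw [hπls, hπrs, eC_inl_inr] at hneg
          exact hneg ⟨by rw [hD.1], hD.2⟩
      | Sum.inr (u, k), Sum.inl w =>
        exfalso
        rcases he with ⟨hpos, hneg⟩ | ⟨hD, hneg⟩
        · rw [hπls, hπrs, eC_inr_inl] at hpos
          exact hneg (D_inr_inl.mpr ⟨σ.symm.injective hpos.1, hpos.2⟩)
        · rw [D_inr_inl] at hD
          rw [hπls, hπrs, eC_inr_inl] at hneg
          exact hneg ⟨by rw [hD.1], hD.2⟩
      | Sum.inr (u, k), Sum.inr (u', k') =>
        rcases he with ⟨hpos, hneg⟩ | ⟨hD, hneg⟩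
        · exfalso
          rw [hπrs, hπrs, eC_inr_inr] at hpos
          exact hneg (D_inr_inr.mpr (Or.inl ⟨σ.symm.injective hpos.1, hpos.2⟩))
        · right
          rw [hπrs, hπrs, eC_inr_inr] at hneg
          rw [D_inr_inr] at hD
          rcases hD with ⟨rfl, hkk⟩ | ⟨hk0, hk0', hne, hdiv⟩
          · exact absurd ⟨rfl, hkk⟩ hneg
          · rw [Finset.mem_coe, hk0, hk0']
            exact mem_msF hEven hne hdiv
  have hmu : muEdit (extendCliques G q) (Dgraph n q) π ≤ (s2 ∪ msF n q).card := by
    rw [muEdit, ← Set.ncard_coe_finset]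
    exact Set.ncard_le_ncard hsubset (Set.toFinite _)
  have hcyc_sub : cyc ⊆ iG := by
    intro e he
    induction e using Sym2.ind with
    | _ a b =>
      rw [hcycdef, SimpleGraph.mem_edgeFinset, SimpleGraph.mem_edgeSet] at he
      have := mem_imG (σ := σ) (hcycadj a b he)
      simpa using this
  have hs2card : (iG ∩ cyc).card + s2.card = iG.card := by
    rw [hs2, Finset.card_image_of_injective _ ψmap_injective]
    exact Finset.card_inter_add_card_sdiff iG cyc
  have hiGcyc : (iG ∩ cyc).card = cyc.card := by
    rw [Finset.inter_eq_right.mpr hcyc_sub]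
  have hcyccard : cyc.card = n := cycle_edge_card (by omega)
  have hiGcard : iG.card = G.edgeFinset.card :=
    Finset.card_image_of_injective _ (Sym2.map.injective σ.injective)
  have hGcard : 2 * G.edgeFinset.card = 3 * n := G_edge_card hcard hreg
  have hmsFcard : 2 * (msF n q).card = n := msF_card hEven
  have hunion : (s2 ∪ msF n q).card ≤ s2.card + (msF n q).card := Finset.card_union_le _ _
  omega

end Counting

lemma deltaEdit_le_muEdit' {V W : Type*} [Fintype W] (G : SimpleGraph V) (H : SimpleGraph W)
    (π : V ≃ W) : deltaEdit G H ≤ muEdit G H π :=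
  ciInf_le (OrderBot.bddBelow _) π

lemma exists_muEdit_eq_deltaEdit {V W : Type*} [Fintype W] (G : SimpleGraph V)
    (H : SimpleGraph W) (hne : Nonempty (V ≃ W)) :
    ∃ π, muEdit G H π = deltaEdit G H := by
  have : deltaEdit G H ∈ Set.range (fun π : V ≃ W => muEdit G H π) := by
    rw [deltaEdit, ← sInf_range]
    exact Nat.sInf_mem (Set.range_nonempty _)
  exact this

end Stmt4Aux


/-- Let `G` be a 3-regular graph on `n` vertices (`n` even, `n ≥ 4`) and
`q = 3n + 4`. Then `δ_edit(G[q], D_{n,q}) ≤ n` if and only if `G` has a Hamiltonian cycle. -/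
theorem statement_4 {V : Type*} [Fintype V] [DecidableEq V] (n : ℕ) (hEven : Even n)
    (hn : 4 ≤ n) (G : SimpleGraph V) [DecidableRel G.Adj] (hcard : Fintype.card V = n)
    (hreg : G.IsRegularOfDegree 3) :
    deltaEdit (extendCliques G (3 * n + 4)) (Dgraph n (3 * n + 4)) ≤ n ↔
      G.IsHamiltonian := by
  have hq1 : n + 4 ≤ 3 * n + 4 := by omega
  have hq2 : 2 * n + 2 ≤ 3 * n + 4 := by omega
  haveI : NeZero n := ⟨by omega⟩
  constructor
  · intro hd
    have hne : Nonempty ((V ⊕ V × Fin (3 * n + 4 + 1)) ≃ (Fin n ⊕ Fin n × Fin (3 * n + 4 + 1))) :=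
      ⟨Fintype.equivOfCardEq (by simp [hcard])⟩
    obtain ⟨π, hπ⟩ := Stmt4Aux.exists_muEdit_eq_deltaEdit
      (extendCliques G (3 * n + 4)) (Dgraph n (3 * n + 4)) hne
    exact Stmt4Aux.ham_of_cheap hn hEven hq1 hq2 hcard hreg π (by rw [hπ]; exact hd)
  · intro hham
    obtain ⟨σ0, hadj0⟩ := exists_equiv_of_isHamiltonian (by omega) G hcard hham
    obtain ⟨π, hπ⟩ := Stmt4Aux.cheap_of_ham (q := 3 * n + 4) hn hEven hcard hreg σ0 hadj0
    exact le_trans (Stmt4Aux.deltaEdit_le_muEdit' _ _ π) hπ
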